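/- Let ε and δ be real numbers with 0 < ε ≤ 1 and 0 < δ < 1, let S > 0 be real, and set σ = S·√(2·log(1.25/δ))/ε. Let a, b ∈ ℝ with |a − b| ≤ S. Then for every measurable set O ⊆ ℝ, 𝒩(a, σ²)(O) ≤ exp(ε)·𝒩(b, σ²)(O) + δ, where 𝒩(m, σ²) denotes the Gaussian probability measure on ℝ with mean m and variance σ². -/

import Mathlib

open MeasureTheory ProbabilityTheory Real Set
open scoped ENNReal NNReal

lemma GM.setIntegral_Ioi_comp_add (f : ℝ → ℝ) (c d : ℝ) :
    ∫ x in Ioi c, f (x + d) = ∫ x in Ioi (c + d), f x := by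
  have A : MeasurableEmbedding fun x : ℝ => x + d :=
    (Homeomorph.addRight d).measurableEmbedding
  have h := MeasurableEmbedding.setIntegral_map (μ := volume) A f (Ioi (c + d))
  rw [map_add_right_eq_self volume d] at h
  have hpre : (fun x : ℝ => x + d) ⁻¹' Ioi (c + d) = Ioi c := by ext x; simp
  rw [hpre] at h
  exact h.symm

lemma GM.half (v : NNReal) (hv : v ≠ 0) :
    ∫ x in Ioi (0:ℝ), gaussianPDFReal 0 v x = 1/2 := by
  have h1 : ∫ x, gaussianPDFReal 0 v x = 1 := integral_gaussianPDFReal_eq_one 0 hv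
  have hint := integrable_gaussianPDFReal 0 v
  have hsplit : (∫ x in Iic (0:ℝ), gaussianPDFReal 0 v x)
      + ∫ x in Ioi (0:ℝ), gaussianPDFReal 0 v x = 1 := by
    rw [← h1]
    exact intervalIntegral.integral_Iic_add_Ioi hint.integrableOn hint.integrableOn
  have heven : ∀ x : ℝ, gaussianPDFReal 0 v (-x) = gaussianPDFReal 0 v x := by
    intro x; unfold gaussianPDFReal; ring_nf
  have h2 := integral_comp_neg_Iic (0:ℝ) (gaussianPDFReal 0 v)
  simp only [heven, neg_zero] at h2
  rw [h2] at hsplit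
  linarith

lemma GM.tail_nonneg (v : NNReal) (hv : v ≠ 0) {r : ℝ} (hr : 0 ≤ r) :
    ∫ x in Ioi r, gaussianPDFReal 0 v x ≤ Real.exp (-(r^2)/(2*v)) * (1/2) := by
  have hvpos : (0:ℝ) < v := by positivity
  have hint := integrable_gaussianPDFReal 0 v
  have hsub : ∫ x in Ioi r, gaussianPDFReal 0 v x
      = ∫ x in Ioi (0:ℝ), gaussianPDFReal 0 v (x + r) := by
    rw [GM.setIntegral_Ioi_comp_add, zero_add]
  rw [hsub]
  have hpt : ∀ x ∈ Ioi (0:ℝ), gaussianPDFReal 0 v (x + r)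
      ≤ Real.exp (-(r^2)/(2*v)) * gaussianPDFReal 0 v x := by
    intro x hx
    have hx0 : (0:ℝ) < x := hx
    unfold gaussianPDFReal
    have hrhs : Real.exp (-(r^2)/(2*(v:ℝ))) * ((Real.sqrt (2*π*(v:ℝ)))⁻¹ * Real.exp (-(x-0)^2/(2*(v:ℝ))))
        = (Real.sqrt (2*π*(v:ℝ)))⁻¹ * Real.exp (-(x-0)^2/(2*(v:ℝ)) + -(r^2)/(2*(v:ℝ))) := by
      rw [Real.exp_add]; ring
    rw [hrhs]
    gcongr
    rw [← add_div, div_le_div_iff₀ (by positivity) (by positivity)]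
    nlinarith [mul_pos hx0 (lt_of_lt_of_le hvpos le_rfl), mul_nonneg (mul_nonneg hx0.le hr) hvpos.le]
  have hle := setIntegral_mono_on
    ((hint.comp_add_right r).integrableOn)
    ((hint.integrableOn.const_mul _))
    measurableSet_Ioi hpt
  calc ∫ x in Ioi (0:ℝ), gaussianPDFReal 0 v (x + r)
      ≤ ∫ x in Ioi (0:ℝ), Real.exp (-(r^2)/(2*v)) * gaussianPDFReal 0 v x := hle
    _ = Real.exp (-(r^2)/(2*v)) * (1/2) := by
        rw [MeasureTheory.integral_const_mul, GM.half v hv]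

lemma GM.tail_neg (v : NNReal) (hv : v ≠ 0) {r : ℝ} (hr : r ≤ 0) :
    ∫ x in Ioi r, gaussianPDFReal 0 v x ≤ 1/2 + (-r) * (Real.sqrt (2*π*v))⁻¹ := by
  have hvpos : (0:ℝ) < v := by positivity
  have hint := integrable_gaussianPDFReal 0 v
  have hunion : Ioc r 0 ∪ Ioi (0:ℝ) = Ioi r := Ioc_union_Ioi_eq_Ioi hr
  rw [← hunion, setIntegral_union (Ioc_disjoint_Ioi le_rfl) measurableSet_Ioi
    hint.integrableOn hint.integrableOn]
  have h1 : ∫ x in Ioc r 0, gaussianPDFReal 0 v x ≤ (-r) * (Real.sqrt (2*π*v))⁻¹ := by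
    have hpt : ∀ x ∈ Ioc r (0:ℝ), gaussianPDFReal 0 v x ≤ (Real.sqrt (2*π*v))⁻¹ := by
      intro x _
      unfold gaussianPDFReal
      have : Real.exp (-(x-0)^2/(2*v)) ≤ 1 := by
        apply Real.exp_le_one_iff.mpr
        apply div_nonpos_of_nonpos_of_nonneg
        · nlinarith [sq_nonneg (x-0)]
        · positivity

      calc (Real.sqrt (2*π*v))⁻¹ * Real.exp (-(x-0)^2/(2*v))
          ≤ (Real.sqrt (2*π*v))⁻¹ * 1 := by gcongr
        _ = (Real.sqrt (2*π*v))⁻¹ := mul_one _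
    calc ∫ x in Ioc r 0, gaussianPDFReal 0 v x
        ≤ ∫ _x in Ioc r 0, (Real.sqrt (2*π*v))⁻¹ :=
          setIntegral_mono_on hint.integrableOn (integrableOn_const
            (by rw [Real.volume_Ioc]; exact ENNReal.ofReal_ne_top)) measurableSet_Ioc hpt
      _ = (-r) * (Real.sqrt (2*π*v))⁻¹ := by
          rw [setIntegral_const, Real.volume_real_Ioc, smul_eq_mul, max_eq_left (by linarith)]
          ring
  have h2 : ∫ x in Ioi (0:ℝ), gaussianPDFReal 0 v x = 1/2 := GM.half v hv
  linarith

set_option maxHeartbeats 1000000 in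
lemma GM.aux (ε δ S : ℝ) (hε0 : 0 < ε) (hε1 : ε ≤ 1) (hδ0 : 0 < δ) (hδ1 : δ < 1) (hS : 0 < S)
    (σ : ℝ) (hσ : σ = S * Real.sqrt (2 * Real.log (1.25 / δ)) / ε)
    (a b : ℝ) (hd0 : 0 < a - b) (hdS : a - b ≤ S) (O : Set ℝ) (hO : MeasurableSet O) :
    gaussianReal a ((σ ^ 2).toNNReal) O ≤
      ENNReal.ofReal (Real.exp ε) * gaussianReal b ((σ ^ 2).toNNReal) O + ENNReal.ofReal δ := by
  set L := Real.log (1.25 / δ) with hLdef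
  have hL : 0 < L := Real.log_pos (by rw [lt_div_iff₀ hδ0]; linarith)
  set c := Real.sqrt (2 * L) with hcdef
  have hc : 0 < c := Real.sqrt_pos.mpr (by linarith)
  have hc2 : c ^ 2 = 2 * L := Real.sq_sqrt (by linarith)
  have hσpos : 0 < σ := by rw [hσ]; positivity
  set v := (σ ^ 2).toNNReal with hvdef
  have hvR : (v : ℝ) = σ ^ 2 := Real.coe_toNNReal _ (sq_nonneg σ)
  have hvne : v ≠ 0 := by
    simp only [hvdef, ne_eq, Real.toNNReal_eq_zero, not_le]
    positivity
  have hσc : σ = S * c / ε := by rw [hσ]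
  clear_value L c
  have hexpL : Real.exp (-L) = δ * (4/5) := by
    rw [hLdef, ← Real.log_inv, inv_div, Real.exp_log (by positivity)]
    norm_num
    ring
  set d := a - b with hddef
  set θ := (a + b) / 2 + σ ^ 2 * ε / d with hθdef
  clear_value v d θ
  -- pointwise density bound off the bad set
  have hpdf : ∀ x : ℝ, x ≤ θ →
      gaussianPDFReal a v x ≤ Real.exp ε * gaussianPDFReal b v x := by
    intro x hx
    have hxd : d * (x - (a + b) / 2) ≤ σ ^ 2 * ε := by
      have hx2 : x - (a+b)/2 ≤ σ^2 * ε / d := by rw [hθdef] at hx; linarith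
      calc d * (x - (a+b)/2) ≤ d * (σ^2*ε/d) := by gcongr
        _ = σ^2*ε := by field_simp
    unfold gaussianPDFReal
    rw [hvR]
    have hrhs : Real.exp ε * ((Real.sqrt (2*π*σ^2))⁻¹ * Real.exp (-(x-b)^2/(2*σ^2)))
        = (Real.sqrt (2*π*σ^2))⁻¹ * Real.exp (-(x-b)^2/(2*σ^2) + ε) := by
      rw [Real.exp_add]; ring
    rw [hrhs]
    gcongr
    have h2σ : (0:ℝ) < 2*σ^2 := by positivity
    have hnum : 0 ≤ (x-a)^2 - (x-b)^2 + ε*(2*σ^2) := by nlinarith [hxd]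
    have hexpand : (-(x-b)^2/(2*σ^2) + ε) - (-(x-a)^2/(2*σ^2))
        = ((x-a)^2 - (x-b)^2 + ε*(2*σ^2))/(2*σ^2) := by field_simp; ring
    have := div_nonneg hnum h2σ.le
    linarith [hexpand ▸ this]
  have hsplit : gaussianReal a v O ≤ gaussianReal a v (O ∩ Iic θ) + gaussianReal a v (Ioi θ) := by
    refine le_trans (measure_mono ?_) (measure_union_le _ _)
    intro x hx
    by_cases h : x ≤ θ
    · exact Or.inl ⟨hx, h⟩
    · exact Or.inr (lt_of_not_ge h)
  have hgood : gaussianReal a v (O ∩ Iic θ) ≤ ENNReal.ofReal (Real.exp ε) * gaussianReal b v O := by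
    rw [gaussianReal_apply a hvne, gaussianReal_apply b hvne]
    calc ∫⁻ x in O ∩ Iic θ, gaussianPDF a v x
        ≤ ∫⁻ x in O ∩ Iic θ, ENNReal.ofReal (Real.exp ε) * gaussianPDF b v x := by
          refine setLIntegral_mono ((measurable_gaussianPDF b v).const_mul _) ?_
          intro x hx
          unfold gaussianPDF
          rw [← ENNReal.ofReal_mul (Real.exp_nonneg ε)]
          exact ENNReal.ofReal_le_ofReal (hpdf x hx.2)
      _ = ENNReal.ofReal (Real.exp ε) * ∫⁻ x in O ∩ Iic θ, gaussianPDF b v x :=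
          lintegral_const_mul _ (measurable_gaussianPDF b v)
      _ ≤ ENNReal.ofReal (Real.exp ε) * ∫⁻ x in O, gaussianPDF b v x := by
          gcongr
          exact inter_subset_left
  have hbad : gaussianReal a v (Ioi θ) ≤ ENNReal.ofReal δ := by
    rw [gaussianReal_apply_eq_integral a hvne]
    apply ENNReal.ofReal_le_ofReal
    have hshiftpt : ∀ x : ℝ, gaussianPDFReal a v x = gaussianPDFReal 0 v (x + -a) := by
      intro x; unfold gaussianPDFReal; ring_nf
    have hshift : ∫ x in Ioi θ, gaussianPDFReal a v x
        = ∫ x in Ioi (θ + -a), gaussianPDFReal 0 v x := by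
      simp_rw [hshiftpt]
      exact GM.setIntegral_Ioi_comp_add _ θ (-a)
    rw [hshift]
    set r0 := σ^2 * ε / S - S / 2 with hr0def
    have hθa : θ + -a = σ^2*ε/d - d/2 := by rw [hθdef, hddef]; ring
    have hge : r0 ≤ θ + -a := by
      rw [hθa, hr0def]
      have h1 : σ^2*ε/S ≤ σ^2*ε/d := by
        apply div_le_div_of_nonneg_left (by positivity) hd0 hdS
      linarith
    have hmono : ∫ x in Ioi (θ + -a), gaussianPDFReal 0 v x
        ≤ ∫ x in Ioi r0, gaussianPDFReal 0 v x := by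
      apply setIntegral_mono_set (integrable_gaussianPDFReal 0 v).integrableOn
        (ae_of_all _ fun x => gaussianPDFReal_nonneg 0 v x)
      exact HasSubset.Subset.eventuallyLE (Ioi_subset_Ioi hge)
    refine le_trans hmono ?_
    set t0 := c - ε/(2*c) with ht0def
    have hr0σ : r0 = σ * t0 := by
      rw [hr0def, ht0def, hσc]
      field_simp
    clear_value r0 t0
    rcases le_or_gt 0 t0 with ht0 | ht0
    · -- nonnegative threshold case
      have hr0 : 0 ≤ r0 := by rw [hr0σ]; exact mul_nonneg hσpos.le ht0
      refine le_trans (GM.tail_nonneg v hvne hr0) ?_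
      have harg : -(r0^2)/(2*(v:ℝ)) = -(t0^2)/2 := by
        rw [hvR, hr0σ]; field_simp
      rw [harg]
      -- t0^2 ≥ 2L - 1
      have hu : c * (ε/(2*c)) = ε/2 := by field_simp
      have hexp2 : t0^2 = c^2 - 2*(c*(ε/(2*c))) + (ε/(2*c))^2 := by rw [ht0def]; ring
      have ht0sq : 2*L - 1 ≤ t0^2 := by
        rw [hexp2, hc2, hu]
        linarith [sq_nonneg (ε/(2*c))]
      have hmon : Real.exp (-(t0^2)/2) ≤ Real.exp (1/2) * Real.exp (-L) := by
        rw [← Real.exp_add]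
        apply Real.exp_le_exp.mpr
        linarith
      have hehalf : Real.exp (1/2) < 5/2 := by
        have hsq : Real.exp (1/2) * Real.exp (1/2) = Real.exp 1 := by
          rw [← Real.exp_add]; norm_num
        have he : Real.exp 1 < 25/4 := by
          have h9 := Real.exp_one_lt_d9
          norm_num at h9
          linarith
        nlinarith [Real.exp_pos (1/2)]
      have hmul : Real.exp (1/2) * (δ * (4/5)) ≤ (5/2) * (δ * (4/5)) :=
        mul_le_mul_of_nonneg_right hehalf.le (by positivity)
      rw [hexpL] at hmon
      linarith
    · -- negative threshold case
      have hr0 : r0 ≤ 0 := by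
        rw [hr0σ]
        exact mul_nonpos_of_nonneg_of_nonpos hσpos.le ht0.le
      refine le_trans (GM.tail_neg v hvne hr0) ?_
      have hsqv : Real.sqrt (2*π*(v:ℝ)) = σ * Real.sqrt (2*π) := by
        rw [hvR, show 2*π*σ^2 = σ^2 * (2*π) by ring, Real.sqrt_mul (by positivity),
          Real.sqrt_sq hσpos.le]
      have hterm : (-r0) * (Real.sqrt (2*π*(v:ℝ)))⁻¹ = (-t0) / Real.sqrt (2*π) := by
        rw [hsqv, hr0σ]
        have hs : Real.sqrt (2*π) > 0 := Real.sqrt_pos.mpr (by positivity)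
        field_simp
      rw [hterm]
      -- numeric facts
      have h4L : 4*L < ε := by
        have hlt : c < ε/(2*c) := by rw [ht0def] at ht0; linarith
        have h2c : (0:ℝ) < 2*c := by linarith
        have h' : c * (2*c) < ε := (lt_div_iff₀ h2c).mp hlt
        nlinarith [hc2, h']
      have hδbig : 15/16 ≤ δ := by
        have hLe : Real.exp (-(1:ℝ)/4) ≤ Real.exp (-L) := by
          apply Real.exp_le_exp.mpr; linarith
        have h34 : (3:ℝ)/4 ≤ Real.exp (-(1:ℝ)/4) := by
          nlinarith [Real.add_one_le_exp (-(1:ℝ)/4)]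
        rw [hexpL] at hLe
        linarith
      have hc25 : 2/5 ≤ c^2 := by
        have hlog : (1:ℝ)/5 ≤ Real.log 1.25 := by
          rw [Real.le_log_iff_exp_le (by norm_num)]
          have := Real.add_one_le_exp (-(1:ℝ)/5)
          have hpos := Real.exp_pos (-(1:ℝ)/5)
          have hinv : Real.exp ((1:ℝ)/5) = (Real.exp (-(1:ℝ)/5))⁻¹ := by
            rw [← Real.exp_neg]; norm_num
          rw [hinv]
          rw [inv_le_iff_one_le_mul₀ hpos]
          nlinarith
        have hLlog : Real.log 1.25 ≤ L := by
          rw [hLdef]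
          apply Real.log_le_log (by norm_num)
          rw [le_div_iff₀ hδ0]
          nlinarith
        linarith [hc2]
      have hcl : 0.63 ≤ c := by nlinarith
      have hπ : 2.4 ≤ Real.sqrt (2*π) := by
        have h6 : (5.76:ℝ) ≤ 2*π := by nlinarith [Real.pi_gt_three]
        nlinarith [Real.sq_sqrt (show (0:ℝ) ≤ 2*π by positivity),
          Real.sqrt_nonneg (2*π)]
      have ht0b : -t0 ≤ 1/(2*c) := by
        rw [ht0def]
        have h2c : (0:ℝ) < 2*c := by linarith
        have : ε/(2*c) ≤ 1/(2*c) := by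
          rw [div_le_div_iff_of_pos_right h2c]
          exact hε1
        linarith
      have ht0b2 : -t0 ≤ 1/1.26 := by
        refine le_trans ht0b ?_
        rw [div_le_div_iff₀ (by linarith) (by norm_num)]
        linarith
      have hdiv : (-t0) / Real.sqrt (2*π) ≤ 7/16 := by
        have hnn : 0 ≤ -t0 := by linarith
        calc (-t0) / Real.sqrt (2*π) ≤ (1/1.26) / 2.4 := by
              apply div_le_div₀ (by norm_num) ht0b2 (by norm_num) hπ
          _ ≤ 7/16 := by norm_num
      linarith
  calc gaussianReal a v O ≤ gaussianReal a v (O ∩ Iic θ) + gaussianReal a v (Ioi θ) := hsplit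
    _ ≤ ENNReal.ofReal (Real.exp ε) * gaussianReal b v O + ENNReal.ofReal δ :=
        add_le_add hgood hbad

lemma GM.reflect (μ : ℝ) (v : NNReal) (O : Set ℝ) (hO : MeasurableSet O) :
    gaussianReal μ v O = gaussianReal (-μ) v (Neg.neg ⁻¹' O) := by
  have hmap := gaussianReal_map_const_mul (μ := μ) (v := v) (-1)
  have h1 : (NNReal.mk ((-1:ℝ)^2) (sq_nonneg _)) = 1 := by
    ext
    norm_num
  rw [h1, one_mul] at hmap
  have hμ : (-1:ℝ) * μ = -μ := by ring
  rw [hμ] at hmap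
  have hOm : MeasurableSet (Neg.neg ⁻¹' O) := hO.preimage measurable_neg
  rw [← hmap, Measure.map_apply (measurable_const_mul (-1)) hOm]
  congr 1
  ext x
  simp

/-- Theorem 3 (Gaussian mechanism) in one dimension: Gaussians with means at
distance at most `S` and common standard deviation
`σ = S·√(2·log(1.25/δ))/ε` satisfy the `(ε, δ)`-DP inequality. -/
theorem gaussian_mechanism_dp
    (ε δ S : ℝ) (hε0 : 0 < ε) (hε1 : ε ≤ 1) (hδ0 : 0 < δ) (hδ1 : δ < 1) (hS : 0 < S)
    (σ : ℝ) (hσ : σ = S * Real.sqrt (2 * Real.log (1.25 / δ)) / ε)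
    (a b : ℝ) (hab : |a - b| ≤ S) :
    ∀ O : Set ℝ, MeasurableSet O →
      gaussianReal a ((σ ^ 2).toNNReal) O ≤
        ENNReal.ofReal (Real.exp ε) * gaussianReal b ((σ ^ 2).toNNReal) O
          + ENNReal.ofReal δ := by
  intro O hO
  rcases lt_trichotomy a b with hlt | heq | hgt
  · have h1 : b - a ≤ S := by
      rw [abs_sub_comm] at hab
      exact le_trans (le_abs_self _) hab
    have key := GM.aux ε δ S hε0 hε1 hδ0 hδ1 hS σ hσ (-a) (-b) (by linarith) (by linarith)
      (Neg.neg ⁻¹' O) (hO.preimage measurable_neg)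
    rw [GM.reflect a _ O hO, GM.reflect b _ O hO]
    exact key
  · have h1 : (1:ℝ≥0∞) ≤ ENNReal.ofReal (Real.exp ε) := by
      rw [← ENNReal.ofReal_one]
      exact ENNReal.ofReal_le_ofReal (by nlinarith [Real.add_one_le_exp ε])
    calc gaussianReal a ((σ ^ 2).toNNReal) O
        = 1 * gaussianReal b ((σ ^ 2).toNNReal) O := by rw [heq, one_mul]
      _ ≤ ENNReal.ofReal (Real.exp ε) * gaussianReal b ((σ ^ 2).toNNReal) O :=
          mul_le_mul_left h1 _
      _ ≤ ENNReal.ofReal (Real.exp ε) * gaussianReal b ((σ ^ 2).toNNReal) O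
            + ENNReal.ofReal δ := le_self_add
  · exact GM.aux ε δ S hε0 hε1 hδ0 hδ1 hS σ hσ a b (by linarith)
      (le_trans (le_abs_self _) hab) O hO
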